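/- Let l ≥ 3 be an integer, let H be a 3-graph containing no 3-uniform loose cycle of length l, and let (X,Y) be an extender in H. Then X contains a subset Z with |Z| ≥ |X|/(l−2) that is independent in the reduced hypergraph H*. -/
import Mathlib


open Finset

section Defs

variable {α : Type*} [DecidableEq α]

/-- `e 0, …, e (l-1)` form a loose cycle of length `l`: distinct edges, each of size
at least 2, cyclically consecutive edges meet in exactly one vertex, all other pairs
of edges are disjoint. -/
def IsLooseCycleOn (l : ℕ) (e : ℕ → Finset α) : Prop :=
  (∀ i < l, ∀ j < l, i ≠ j → e i ≠ e j) ∧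
  (∀ i < l, 2 ≤ (e i).card) ∧
  (∀ i < l, (e i ∩ e ((i + 1) % l)).card = 1) ∧
  (∀ i < l, ∀ j < l, j ≠ i → j ≠ (i + 1) % l → i ≠ (j + 1) % l → e i ∩ e j = ∅)

/-- A hypergraph with edge set `E` contains a loose cycle of length `l`. -/
def ContainsLooseCycle (l : ℕ) (E : Set (Finset α)) : Prop :=
  ∃ e : ℕ → Finset α, IsLooseCycleOn l e ∧ ∀ i < l, e i ∈ E

/-- A hypergraph with edge set `E` contains an `r`-uniform loose cycle of length `l`. -/
def ContainsUniformLooseCycle (r l : ℕ) (E : Set (Finset α)) : Prop :=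
  ∃ e : ℕ → Finset α, IsLooseCycleOn l e ∧ (∀ i < l, (e i).card = r) ∧ ∀ i < l, e i ∈ E

/-- `f 0, …, f (k-1)` form a simple path of length `k`: each edge has size at least 2,
consecutive edges meet, non-consecutive edges are disjoint, and any two distinct
edges meet in at most one vertex. -/
def IsSimplePathOn (k : ℕ) (f : ℕ → Finset α) : Prop :=
  (∀ i < k, 2 ≤ (f i).card) ∧
  (∀ i, i + 1 < k → (f i ∩ f (i + 1)).Nonempty) ∧
  (∀ i < k, ∀ j < k, i < j → j ≠ i + 1 → f i ∩ f j = ∅) ∧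
  (∀ i < k, ∀ j < k, i ≠ j → (f i ∩ f j).card ≤ 1)

/-- The simple path `f 0, …, f (k-1)` joins `a` to `b`. -/
def SimplePathJoins (k : ℕ) (f : ℕ → Finset α) (a b : α) : Prop :=
  IsSimplePathOn k f ∧ a ∈ f 0 ∧ b ∈ f (k - 1) ∧
  (2 ≤ k → a ∉ f 1 ∧ b ∉ f (k - 2))

/-- `p` is a heavy pair of the 3-graph `H` (with respect to the parameter `l`):
it is a pair of vertices contained in at least `2l-2` edges of `H`. -/
def PairHeavy (l : ℕ) (H : Finset (Finset α)) (p : Finset α) : Prop :=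
  p.card = 2 ∧ 2 * l - 2 ≤ (H.filter fun e => p ⊆ e).card

/-- `e` is a light edge of the 3-graph `H`: an edge of `H` containing no heavy pair. -/
def EdgeLight (l : ℕ) (H : Finset (Finset α)) (e : Finset α) : Prop :=
  e ∈ H ∧ ∀ p ⊆ e, ¬ PairHeavy l H p

/-- The reduced hypergraph `H*` of a 3-graph `H`: its edges are the light edges of `H`
together with the heavy pairs of `H`. -/
def Reduced (l : ℕ) (H : Finset (Finset α)) : Set (Finset α) :=
  {e | EdgeLight l H e ∨ PairHeavy l H e}

/-- `(X, Y)` is an extender in the 3-graph `H`. -/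
def IsExtender (l : ℕ) (H : Finset (Finset α)) (X Y : Finset α) : Prop :=
  Disjoint X Y ∧ Y.card ≤ 2 * X.card ∧
  ∀ u ∈ X, ∀ v ∈ X, u ≠ v → ∀ S : Finset α,
    Disjoint S ({u, v} ∪ Y) → S.card ≤ 2 * l - 5 →
      ∃ f : ℕ → Finset α, SimplePathJoins 2 f u v ∧ (∀ i < 2, f i ∈ H) ∧
        ∀ i < 2, Disjoint (f i) S

/-- `X` is an independent set of the hypergraph with edge set `E`. -/
def IndepIn (E : Set (Finset α)) (X : Finset α) : Prop := ∀ e ∈ E, ¬ e ⊆ X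

end Defs

namespace LooseAux
variable {α : Type*} [DecidableEq α]

lemma path_mono {f : ℕ → Finset α} {k m : ℕ} (h : IsSimplePathOn m f) (hkm : k ≤ m) :
    IsSimplePathOn k f := by
  obtain ⟨h1, h2, h3, h4⟩ := h
  exact ⟨fun i hi => h1 i (by omega), fun i hi => h2 i (by omega),
    fun i hi j hj hij hne => h3 i (by omega) j (by omega) hij hne,
    fun i hi j hj hne => h4 i (by omega) j (by omega) hne⟩

lemma path_inj {f : ℕ → Finset α} {m : ℕ} (hf : IsSimplePathOn m f) :
    ∀ i < m, ∀ j < m, i ≠ j → f i ≠ f j := by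
  intro i hi j hj hij heq
  have h2 : 2 ≤ (f i).card := hf.1 i hi
  have hle : (f i ∩ f j).card ≤ 1 := hf.2.2.2 i hi j hj hij
  rw [heq] at h2
  rw [heq, Finset.inter_self] at hle
  omega

lemma path_card_bound {f : ℕ → Finset α} {m : ℕ} {K : Finset (Finset α)}
    (hf : IsSimplePathOn m f) (hK : ∀ i < m, f i ∈ K) : m ≤ K.card := by
  have : (Finset.range m).card ≤ K.card := by
    apply Finset.card_le_card_of_injOn f
    · intro i hi; exact hK i (Finset.mem_range.1 hi)
    · intro i hi j hj hij
      by_contra hne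
      exact path_inj hf i (Finset.mem_range.1 hi) j (Finset.mem_range.1 hj) hne hij
  simpa using this


lemma path_disj {f : ℕ → Finset α} {m : ℕ} (hf : IsSimplePathOn m f) :
    ∀ i < m, ∀ j < m, i ≠ j → j ≠ i + 1 → i ≠ j + 1 → f i ∩ f j = ∅ := by
  intro i hi j hj hij hji hij'
  rcases lt_or_gt_of_ne hij with h | h
  · exact hf.2.2.1 i hi j hj h hji
  · rw [Finset.inter_comm]; exact hf.2.2.1 j hj i hi h (by omega)

lemma path_adj_card {f : ℕ → Finset α} {m : ℕ} (hf : IsSimplePathOn m f) :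
    ∀ i, i + 1 < m → (f i ∩ f (i + 1)).card = 1 := by
  intro i hi
  refine le_antisymm (hf.2.2.2 i (by omega) (i + 1) hi (by omega)) ?_
  exact Finset.card_pos.2 (hf.2.1 i hi)

lemma path_union_card {f : ℕ → Finset α} {m : ℕ}
    (h2 : ∀ i, i + 1 < m → (f i ∩ f (i + 1)).Nonempty) :
    ∀ j ≤ m, ((Finset.range j).biUnion f).card + j ≤ (∑ i ∈ Finset.range j, (f i).card) + 1 := by
  intro j
  induction j with
  | zero => intro _; simp
  | succ n ih =>
    intro hn
    have hihn := ih (by omega)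
    rw [Finset.range_add_one, Finset.biUnion_insert, Finset.sum_insert (by simp)]
    have hcu : (f n ∪ (Finset.range n).biUnion f).card + (f n ∩ (Finset.range n).biUnion f).card
        = (f n).card + ((Finset.range n).biUnion f).card := Finset.card_union_add_card_inter _ _
    rcases Nat.eq_zero_or_pos n with h0 | hpos
    · subst h0; simp
    · have hne : (f n ∩ (Finset.range n).biUnion f).Nonempty := by
        obtain ⟨x, hx⟩ := h2 (n - 1) (by omega)
        refine ⟨x, Finset.mem_inter.2 ⟨?_, ?_⟩⟩
        · have : n - 1 + 1 = n := by omega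
          rw [this] at hx; exact (Finset.mem_inter.1 hx).2
        · exact Finset.mem_biUnion.2 ⟨n - 1, Finset.mem_range.2 (by omega),
            (Finset.mem_inter.1 hx).1⟩
      have := Finset.card_pos.2 hne
      omega

lemma mod_ne_mod (c : ℕ) {u v : ℕ} (huv : u < v) (hlt : v - u < c) : u % c ≠ v % c := by
  intro heq
  have hdvd : c ∣ v - u := (Nat.modEq_iff_dvd' (by omega)).1 heq
  have := Nat.le_of_dvd (by omega) hdvd
  omega

lemma rotation {c : ℕ} (hc : 3 ≤ c) (g : ℕ → Finset α)
    (hcard : ∀ i < c, 2 ≤ (g i).card)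
    (hadj : ∀ i < c, (g i ∩ g ((i + 1) % c)).card = 1)
    (hdisj : ∀ i < c, ∀ j < c, j ≠ i → j ≠ (i + 1) % c → i ≠ (j + 1) % c → g i ∩ g j = ∅)
    (h : Finset α) (hh : 2 ≤ h.card) (s : ℕ) (hs : s < c)
    (hhs : (h ∩ g s).card = 1)
    (hother : ∀ j < c, j ≠ s → (j + 1) % c ≠ s → h ∩ g j = ∅) :
    IsSimplePathOn c (fun j => if j = 0 then h else g ((s + j - 1) % c)) := by
  have hc0 : 0 < c := by omega
  have hlt : ∀ j : ℕ, (s + j - 1) % c < c := fun j => Nat.mod_lt _ hc0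
  have hss : s % c = s := Nat.mod_eq_of_lt hs
  have hsucc : ∀ x : ℕ, 1 ≤ x → ((s + x - 1) % c + 1) % c = (s + x) % c := by
    intro x hx
    rw [Nat.mod_add_mod]
    congr 1
    omega
  have F1 : ∀ j, 2 ≤ j → j < c → h ∩ g ((s + j - 1) % c) = ∅ := by
    intro j h2 hj
    apply hother _ (hlt j)
    · exact fun heq => mod_ne_mod c (by omega : s < s + j - 1) (by omega) (hss.trans heq.symm)
    · rw [hsucc j (by omega)]
      exact fun heq => mod_ne_mod c (by omega : s < s + j) (by omega) (hss.trans heq.symm)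
  have F2 : ∀ x y, 1 ≤ x → x < y → y < c → y ≠ x + 1 →
      g ((s + x - 1) % c) ∩ g ((s + y - 1) % c) = ∅ := by
    intro x y hx hxy hy hne
    apply hdisj _ (hlt x) _ (hlt y)
    · exact fun heq => mod_ne_mod c (by omega : s + x - 1 < s + y - 1) (by omega) heq.symm
    · rw [hsucc x hx]
      exact fun heq => mod_ne_mod c (by omega : s + x < s + y - 1) (by omega) heq.symm
    · rw [hsucc y (by omega)]
      exact fun heq => mod_ne_mod c (by omega : s + x - 1 < s + y) (by omega) heq
  have F3 : ∀ x, 1 ≤ x → x + 1 < c → (g ((s + x - 1) % c) ∩ g ((s + x) % c)).card = 1 := by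
    intro x hx hxc
    rw [← hsucc x hx]
    exact hadj _ (hlt x)
  have heval : ∀ j : ℕ, j ≠ 0 →
      (fun j => if j = 0 then h else g ((s + j - 1) % c)) j = g ((s + j - 1) % c) := by
    intro j hj; simp [hj]
  have h0eval : (fun j => if j = 0 then h else g ((s + j - 1) % c)) 0 = h := by simp
  refine ⟨?_, ?_, ?_, ?_⟩
  · intro i hi
    by_cases h0 : i = 0
    · simpa [h0] using hh
    · rw [heval i h0]
      exact hcard _ (hlt i)
  · intro i hi
    by_cases h0 : i = 0
    · subst h0
      rw [show (0:ℕ) + 1 = 1 from rfl, heval 1 (by omega), h0eval]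
      rw [show s + 1 - 1 = s by omega, hss]
      exact Finset.card_pos.1 (by rw [hhs]; exact Nat.one_pos)
    · rw [heval i h0, heval (i + 1) (by omega)]
      refine Finset.card_pos.1 ?_
      rw [show s + (i + 1) - 1 = s + i by omega, F3 i (by omega) hi]
      exact Nat.one_pos
  · intro i hi j hj hij hne
    by_cases h0 : i = 0
    · subst h0
      rw [heval j (by omega), h0eval]
      exact F1 j (by omega) hj
    · rw [heval i h0, heval j (by omega)]
      exact F2 i j (by omega) hij hj hne
  · intro i hi j hj hij
    have key : ∀ x y, x < c → y < c → x < y → ((if x = 0 then h else g ((s + x - 1) % c)) ∩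
        (if y = 0 then h else g ((s + y - 1) % c))).card ≤ 1 := by
      intro x y hx hy hxy
      by_cases h0 : x = 0
      · subst h0
        rw [if_pos rfl, if_neg (show ¬ y = 0 by omega)]
        by_cases h1 : y = 1
        · subst h1
          rw [show s + 1 - 1 = s by omega, hss, hhs]
        · rw [F1 y (by omega) hy]; simp
      · rw [if_neg h0, if_neg (show ¬ y = 0 by omega)]
        by_cases h1 : y = x + 1
        · subst h1
          rw [show s + (x + 1) - 1 = s + x by omega]
          rw [F3 x (by omega) hy]
        · rw [F2 x y (by omega) hxy hy h1]; simp
    rcases lt_or_gt_of_ne hij with h | h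
    · exact key i j hi hj h
    · rw [Finset.inter_comm]; exact key j i hj hi h

lemma cycle_locality {c : ℕ} (g : ℕ → Finset α)
    (hdisj : ∀ i < c, ∀ j < c, j ≠ i → j ≠ (i + 1) % c → i ≠ (j + 1) % c → g i ∩ g j = ∅)
    (hconn : ∀ i < c, ∀ j < c, i ≠ j →
      (g i ∩ g ((i + 1) % c)) ∩ (g j ∩ g ((j + 1) % c)) = ∅)
    {x : α} {i : ℕ} (hi : i < c) (hx : x ∈ g i ∩ g ((i + 1) % c)) :
    ∀ j < c, x ∈ g j → j = i ∨ j = (i + 1) % c := by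
  intro j hj hxj
  by_contra hcon
  push_neg at hcon
  obtain ⟨hji, hjn⟩ := hcon
  by_cases hij : i = (j + 1) % c
  · have hxc : x ∈ g j ∩ g ((j + 1) % c) :=
      Finset.mem_inter.2 ⟨hxj, by rw [← hij]; exact (Finset.mem_inter.1 hx).1⟩
    have hcc := hconn i hi j hj (fun h => hji h.symm)
    exact Finset.notMem_empty x (hcc ▸ Finset.mem_inter.2 ⟨hx, hxc⟩)
  · have hempty := hdisj i hi j hj hji hjn hij
    exact Finset.notMem_empty x (hempty ▸ Finset.mem_inter.2 ⟨(Finset.mem_inter.1 hx).1, hxj⟩)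

lemma cycle_passenger {c : ℕ} (g : ℕ → Finset α)
    (hdisj : ∀ i < c, ∀ j < c, j ≠ i → j ≠ (i + 1) % c → i ≠ (j + 1) % c → g i ∩ g j = ∅)
    {x : α} {p pm : ℕ} (hp : p < c) (hpm : pm < c) (hpm1 : (pm + 1) % c = p)
    (hxp : x ∈ g p) (hx1 : x ∉ g ((p + 1) % c)) (hx2 : x ∉ g pm) :
    ∀ j < c, x ∈ g j → j = p := by
  intro j hj hxj
  by_contra hjp
  by_cases hj1 : j = (p + 1) % c
  · exact hx1 (hj1 ▸ hxj)
  by_cases hj2 : p = (j + 1) % c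
  · have hjpm : j = pm := by
      have h1 : (j + 1) % c = (pm + 1) % c := by rw [hpm1, ← hj2]
      rcases Nat.lt_or_ge (j + 1) c with h | h
      · rw [Nat.mod_eq_of_lt h] at h1
        rcases Nat.lt_or_ge (pm + 1) c with h' | h'
        · rw [Nat.mod_eq_of_lt h'] at h1; omega
        · have hpmc : pm + 1 = c := by omega
          rw [hpmc, Nat.mod_self] at h1; omega
      · have hj1c : j + 1 = c := by omega
        rw [hj1c, Nat.mod_self] at h1
        rcases Nat.lt_or_ge (pm + 1) c with h' | h'
        · rw [Nat.mod_eq_of_lt h'] at h1; omega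
        · omega
    exact hx2 (hjpm ▸ hxj)
  · have hempty := hdisj p hp j hj hjp hj1 hj2
    exact Finset.notMem_empty x (hempty ▸ Finset.mem_inter.2 ⟨hxp, hxj⟩)

theorem indep_of_no_path (k : ℕ) (hk : 1 ≤ k) :
    ∀ (n : ℕ) (V : Finset α) (K : Finset (Finset α)), V.card ≤ n →
    (∀ e ∈ K, e ⊆ V ∧ 2 ≤ e.card ∧ e.card ≤ 3) →
    (¬ ∃ f : ℕ → Finset α, IsSimplePathOn k f ∧ ∀ i < k, f i ∈ K) →
    ∃ Z, Z ⊆ V ∧ (∀ e ∈ K, ¬ e ⊆ Z) ∧ V.card ≤ k * Z.card := by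
  intro n
  induction n with
  | zero =>
    intro V K hVn hKe hNoP
    refine ⟨V, Finset.Subset.refl V, fun e he hsub => ?_, by omega⟩
    have h1 := (hKe e he).1
    have h2 := (hKe e he).2.1
    have := Finset.card_le_card h1
    omega
  | succ n ih =>
    intro V K hVn hKe hNoP
    classical
    by_cases hK0 : K = ∅
    · refine ⟨V, Finset.Subset.refl V, by simp [hK0], Nat.le_mul_of_pos_left _ (by omega)⟩
    -- the generic descent step
    have step : ∀ (W A : Finset α), W ⊆ V → W.Nonempty → A ⊆ W → W.card ≤ k * A.card →
        (∀ h ∈ K, h ∩ W ⊆ A → h ∩ W = ∅) →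
        ∃ Z, Z ⊆ V ∧ (∀ e ∈ K, ¬ e ⊆ Z) ∧ V.card ≤ k * Z.card := by
      intro W A hWV hWne hAW hWcard hkey
      obtain ⟨Z', hZ'V, hZ'ind, hZ'card⟩ := ih (V \ W) (K.filter (fun e => e ⊆ V \ W))
        (by
          have h1 := Finset.card_sdiff_of_subset hWV
          have h2 := Finset.card_pos.2 hWne
          have h3 := Finset.card_le_card hWV
          omega)
        (fun e he => by
          rw [Finset.mem_filter] at he
          exact ⟨he.2, (hKe e he.1).2.1, (hKe e he.1).2.2⟩)
        (by
          rintro ⟨f, hf, hfK⟩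
          exact hNoP ⟨f, hf, fun i hi => (Finset.mem_filter.1 (hfK i hi)).1⟩)
      have hAZ' : Disjoint A Z' := by
        rw [Finset.disjoint_left]
        intro x hxA hxZ'
        exact (Finset.mem_sdiff.1 (hZ'V hxZ')).2 (hAW hxA)
      refine ⟨A ∪ Z', ?_, ?_, ?_⟩
      · exact Finset.union_subset (hAW.trans hWV) (hZ'V.trans Finset.sdiff_subset)
      · intro e heK heZ
        have heW : e ∩ W ⊆ A := by
          intro x hx
          rw [Finset.mem_inter] at hx
          rcases Finset.mem_union.1 (heZ hx.1) with h | h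
          · exact h
          · exact absurd hx.2 (Finset.mem_sdiff.1 (hZ'V h)).2
        have hW0 := hkey e heK heW
        have heZ' : e ⊆ Z' := by
          intro x hx
          rcases Finset.mem_union.1 (heZ hx) with h | h
          · exact absurd (Finset.mem_inter.2 ⟨hx, hAW h⟩) (by rw [hW0]; exact Finset.notMem_empty x)
          · exact h
        exact hZ'ind e (Finset.mem_filter.2 ⟨heK, heZ'.trans hZ'V⟩) heZ'
      · rw [Finset.card_union_of_disjoint hAZ', Nat.mul_add]
        have h1 := Finset.card_sdiff_of_subset hWV
        have h2 := Finset.card_le_card hWV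
        omega
    -- maximal path length m
    obtain ⟨e0, he0⟩ := Finset.nonempty_iff_ne_empty.2 hK0
    set P : ℕ → Prop := fun t => ∃ f : ℕ → Finset α, IsSimplePathOn t f ∧ ∀ i < t, f i ∈ K with hPdef
    have hPbound : ∀ t, P t → t ≤ K.card := by
      rintro t ⟨f, hf, hfK⟩
      exact path_card_bound hf hfK
    have hP1 : P 1 := by
      refine ⟨fun _ => e0, ⟨fun i _ => (hKe e0 he0).2.1, fun i hi => absurd hi (by omega),
        fun i hi j hj hij hne => absurd hj (by omega),
        fun i hi j hj hne => absurd (show i = j by omega) hne⟩, fun i _ => he0⟩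
    have hk2 : 2 ≤ k := by
      by_contra h
      have hk1 : k = 1 := by omega
      subst hk1
      exact hNoP hP1
    set m := Nat.findGreatest P K.card with hmdef
    have hPm : P m := Nat.findGreatest_spec (hPbound 1 hP1) hP1
    have hm1 : 1 ≤ m := Nat.le_findGreatest (hPbound 1 hP1) hP1
    have hmax : ¬ P (m + 1) := by
      intro hh
      exact Nat.findGreatest_is_greatest (Nat.lt_succ_self m) (hPbound _ hh) hh
    have hmk : m < k := by
      by_contra h
      push_neg at h
      obtain ⟨f, hf, hfK⟩ := hPm
      exact hNoP ⟨f, path_mono hf h, fun i hi => hfK i (by omega)⟩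
    obtain ⟨f, hf, hfK⟩ := hPm
    rcases Nat.lt_or_ge m 2 with hm2 | hm2
    -- case m = 1
    · have hNP2 : ¬ P 2 := by
        have hone : m + 1 = 2 := by omega
        rwa [hone] at hmax
      have hpath2 : ∀ p q : Finset α, p ∈ K → q ∈ K → (p ∩ q).card = 1 → False := by
        intro p q hp hq hcard
        refine hNP2 ⟨fun j => if j = 0 then p else q, ⟨?_, ?_, ?_, ?_⟩, ?_⟩
        · intro i hi
          by_cases h0 : i = 0
          · simpa [h0] using (hKe p hp).2.1
          · simpa [h0] using (hKe q hq).2.1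
        · intro i hi
          have h0 : i = 0 := by omega
          subst h0
          refine Finset.card_pos.1 ?_
          show 0 < ((if (0:ℕ) = 0 then p else q) ∩ (if (0:ℕ) + 1 = 0 then p else q)).card
          rw [if_pos rfl, if_neg (show ¬ (0:ℕ) + 1 = 0 by omega), hcard]
          exact Nat.one_pos
        · intro i hi j hj hij hne
          exact absurd (show j = i + 1 by omega) hne
        · intro i hi j hj hne
          have : (i = 0 ∧ j = 1) ∨ (i = 1 ∧ j = 0) := by omega
          rcases this with ⟨h0, h1⟩ | ⟨h0, h1⟩ <;> subst h0 <;> subst h1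
          · show ((if (0:ℕ) = 0 then p else q) ∩ (if (1:ℕ) = 0 then p else q)).card ≤ 1
            rw [if_pos rfl, if_neg (show ¬ (1:ℕ) = 0 by omega), hcard]
          · show ((if (1:ℕ) = 0 then p else q) ∩ (if (0:ℕ) = 0 then p else q)).card ≤ 1
            rw [if_pos rfl, if_neg (show ¬ (1:ℕ) = 0 by omega), Finset.inter_comm, hcard]
        · intro i hi
          by_cases h0 : i = 0
          · simpa [h0] using hp
          · simpa [h0] using hq
      by_cases hbad : ∃ p ∈ K, ∃ q ∈ K, p ≠ q ∧ (p ∩ q).card = 2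
      · -- a pair of edges sharing two vertices; normalize so that q has three vertices
        obtain ⟨p0, hp0, q0, hq0, hpq0, hcard20⟩ := hbad
        have hnorm : ∃ p ∈ K, ∃ q ∈ K, (p ∩ q).card = 2 ∧ q.card = 3 := by
          rcases Nat.lt_or_ge q0.card 3 with h3 | h3
          · -- q0.card = 2, so q0 ⊆ p0 and p0.card = 3
            have hq2 : q0.card = 2 := by have := (hKe q0 hq0).2.1; omega
            have hsub : p0 ∩ q0 = q0 := by
              apply Finset.eq_of_subset_of_card_le (Finset.inter_subset_right)
              omega
            have hp3 : p0.card = 3 := by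
              have hle := (hKe p0 hp0).2.2
              have hge := (hKe p0 hp0).2.1
              rcases Nat.lt_or_ge p0.card 3 with hh | hh
              · exfalso
                have hp2 : p0.card = 2 := by omega
                have : p0 ∩ q0 = p0 := by
                  apply Finset.eq_of_subset_of_card_le (Finset.inter_subset_left)
                  omega
                exact hpq0 (by rw [← this, hsub])
              · omega
            exact ⟨q0, hq0, p0, hp0, by rw [Finset.inter_comm]; exact hcard20, hp3⟩
          · have := (hKe q0 hq0).2.2
            exact ⟨p0, hp0, q0, hq0, hcard20, by omega⟩
        obtain ⟨p, hp, q, hq, hcard2, hq3⟩ := hnorm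
        have hsq : (q \ p).card = 1 := by
          have h1 : (q \ p).card + (q ∩ p).card = q.card := Finset.card_sdiff_add_card_inter q p
          rw [Finset.inter_comm q p] at h1
          omega
        obtain ⟨s, hs⟩ := Finset.card_eq_one.1 hsq
        have hsq' : s ∈ q ∧ s ∉ p := by
          have : s ∈ q \ p := by rw [hs]; exact Finset.mem_singleton_self s
          exact ⟨(Finset.mem_sdiff.1 this).1, (Finset.mem_sdiff.1 this).2⟩
        obtain ⟨y, hy⟩ := Finset.card_pos.1 (show 0 < p.card by have := (hKe p hp).2.1; omega)
        have hsy : s ≠ y := fun h => hsq'.2 (h ▸ hy)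
        refine step (p ∪ q) {s, y} (Finset.union_subset (hKe p hp).1 (hKe q hq).1)
          ⟨y, Finset.mem_union_left _ hy⟩ ?_ ?_ ?_
        · intro x hx
          rcases Finset.mem_insert.1 hx with rfl | hx
          · exact Finset.mem_union_right _ hsq'.1
          · rw [Finset.mem_singleton] at hx
            subst hx
            exact Finset.mem_union_left _ hy
        · have hWc : (p ∪ q).card ≤ 4 := by
            have h1 := Finset.card_union_add_card_inter p q
            have h2 := (hKe p hp).2.2
            omega
          have hAc : ({s, y} : Finset α).card = 2 := by
            rw [Finset.card_insert_of_notMem (by simpa using hsy), Finset.card_singleton]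
          rw [hAc]
          omega
        · intro h hh hsub
          by_contra hne
          obtain ⟨z, hz⟩ := Finset.nonempty_iff_ne_empty.2 hne
          by_cases hyh : y ∈ h
          · -- h ∩ p = {y}
            have hyp : h ∩ p = {y} := by
              apply Finset.Subset.antisymm
              · intro x hx
                have hx' : x ∈ h ∩ (p ∪ q) :=
                  Finset.mem_inter.2 ⟨(Finset.mem_inter.1 hx).1,
                    Finset.mem_union_left _ (Finset.mem_inter.1 hx).2⟩
                rcases Finset.mem_insert.1 (hsub hx') with rfl | hx''
                · exact absurd (Finset.mem_inter.1 hx).2 hsq'.2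
                · exact hx''
              · intro x hx
                rw [Finset.mem_singleton] at hx
                subst hx
                exact Finset.mem_inter.2 ⟨hyh, hy⟩
            exact hpath2 h p hh hp (by rw [hyp]; exact Finset.card_singleton y)
          · -- then s ∈ h and h ∩ q = {s}
            have hzs : z = s := by
              rcases Finset.mem_insert.1 (hsub hz) with rfl | hz'
              · rfl
              · rw [Finset.mem_singleton] at hz'
                subst hz'
                exact absurd (Finset.mem_inter.1 hz).1 hyh
            subst hzs
            have hsh : z ∈ h := (Finset.mem_inter.1 hz).1
            have hq' : h ∩ q = {z} := by
              apply Finset.Subset.antisymm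
              · intro x hx
                have hx' : x ∈ h ∩ (p ∪ q) :=
                  Finset.mem_inter.2 ⟨(Finset.mem_inter.1 hx).1,
                    Finset.mem_union_right _ (Finset.mem_inter.1 hx).2⟩
                rcases Finset.mem_insert.1 (hsub hx') with rfl | hx''
                · exact Finset.mem_singleton_self _
                · rw [Finset.mem_singleton] at hx''
                  subst hx''
                  exact absurd (Finset.mem_inter.1 hx).1 hyh
              · intro x hx
                rw [Finset.mem_singleton] at hx
                subst hx
                exact Finset.mem_inter.2 ⟨hsh, hsq'.1⟩
            exact hpath2 h q hh hq (by rw [hq']; exact Finset.card_singleton _)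
      · -- all distinct edges are disjoint
        have hdisj : ∀ p ∈ K, ∀ q ∈ K, p ≠ q → p ∩ q = ∅ := by
          intro p hp q hq hpq
          by_contra hne
          have hpos : 0 < (p ∩ q).card :=
            Finset.card_pos.2 (Finset.nonempty_iff_ne_empty.2 hne)
          have hle : (p ∩ q).card ≤ p.card := Finset.card_le_card Finset.inter_subset_left
          have hle3 : (p ∩ q).card ≤ 3 := le_trans hle (hKe p hp).2.2
          rcases Nat.lt_or_ge (p ∩ q).card 2 with h1 | h1
          · exact hpath2 p q hp hq (by omega)
          · rcases Nat.lt_or_ge (p ∩ q).card 3 with h2 | h2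
            · exact hbad ⟨p, hp, q, hq, hpq, by omega⟩
            · have hpeq : p ∩ q = p := by
                apply Finset.eq_of_subset_of_card_le Finset.inter_subset_left
                have hp3 := (hKe p hp).2.2
                omega
              have hqeq : p ∩ q = q := by
                apply Finset.eq_of_subset_of_card_le Finset.inter_subset_right
                have := Finset.card_le_card (Finset.inter_subset_right : p ∩ q ⊆ q)
                have h3q := (hKe q hq).2.2
                omega
              exact hpq (by rw [← hpeq, hqeq])
        have he00 : f 0 ∈ K := hfK 0 (by omega)
        set e := f 0 with hedef
        rcases Nat.lt_or_ge e.card 3 with he2 | he3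
        · -- e.card = 2 : remove e, keep one vertex
          obtain ⟨a, ha⟩ := Finset.card_pos.1 (show 0 < e.card by have := (hKe e he00).2.1; omega)
          refine step e {a} (hKe e he00).1 ⟨a, ha⟩ (by simpa using ha) ?_ ?_
          · have := (hKe e he00).2.2
            simp only [Finset.card_singleton]
            omega
          · intro h hh hsub
            by_contra hne
            have hhe : h = e := by
              by_contra hne'
              exact (Finset.nonempty_iff_ne_empty.2 hne).ne_empty (hdisj h hh e he00 hne')
            rw [hhe, Finset.inter_self] at hsub
            have hc := Finset.card_le_card hsub
            rw [Finset.card_singleton] at hc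
            have hc2 := (hKe e he00).2.1
            omega
        · -- e.card = 3 : remove e, keep two vertices
          obtain ⟨a, ha, b, hb, hab⟩ := Finset.one_lt_card.1 (show 1 < e.card by omega)
          refine step e {a, b} (hKe e he00).1 ⟨a, ha⟩ ?_ ?_ ?_
          · intro x hx
            rcases Finset.mem_insert.1 hx with rfl | hx
            · exact ha
            · rw [Finset.mem_singleton] at hx; subst hx; exact hb
          · have h3 := (hKe e he00).2.2
            have hAc : ({a, b} : Finset α).card = 2 := by
              rw [Finset.card_insert_of_notMem (by simpa using hab), Finset.card_singleton]
            rw [hAc]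
            omega
          · intro h hh hsub
            by_contra hne
            have hhe : h = e := by
              by_contra hne'
              exact (Finset.nonempty_iff_ne_empty.2 hne).ne_empty (hdisj h hh e he00 hne')
            subst hhe
            rw [Finset.inter_self] at hsub
            have hc := Finset.card_le_card hsub
            have hAc : ({a, b} : Finset α).card = 2 := by
              rw [Finset.card_insert_of_notMem (by simpa using hab), Finset.card_singleton]
            rw [hAc] at hc
            omega
    · -- case 2 ≤ m
      have hf01 : (f 0 ∩ f 1).card ≤ 1 := hf.2.2.2 0 (by omega) 1 (by omega) (by omega)
      have ha' : (f 0 \ f 1).Nonempty := by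
        rw [Finset.sdiff_nonempty]
        intro hsub
        have heq : f 0 ∩ f 1 = f 0 := by rw [Finset.inter_eq_left]; exact hsub
        have h2 := hf.1 0 (by omega)
        rw [heq] at hf01; omega
      obtain ⟨a, ha⟩ := ha'
      rw [Finset.mem_sdiff] at ha
      have hfm : (f (m-1) ∩ f (m-2)).card ≤ 1 :=
        hf.2.2.2 (m-1) (by omega) (m-2) (by omega) (by omega)
      have hb' : (f (m-1) \ f (m-2)).Nonempty := by
        rw [Finset.sdiff_nonempty]
        intro hsub
        have heq : f (m-1) ∩ f (m-2) = f (m-1) := by rw [Finset.inter_eq_left]; exact hsub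
        have h2 := hf.1 (m-1) (by omega)
        rw [heq] at hfm; omega
      obtain ⟨b, hb⟩ := hb'
      rw [Finset.mem_sdiff] at hb
      have haf : ∀ j, 1 ≤ j → j < m → a ∉ f j := by
        intro j h1 hj hmem
        rcases Nat.lt_or_ge j 2 with h | h
        · exact ha.2 (by rwa [show j = 1 by omega] at hmem)
        · have hd := path_disj hf 0 (by omega) j hj (by omega) (by omega) (by omega)
          exact Finset.notMem_empty a (hd ▸ Finset.mem_inter.2 ⟨ha.1, hmem⟩)
      have hbf : ∀ j, j < m - 1 → b ∉ f j := by
        intro j hj hmem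
        by_cases h : j = m - 2
        · exact hb.2 (h ▸ hmem)
        · have hd := path_disj hf (m-1) (by omega) j (by omega) (by omega) (by omega) (by omega)
          exact Finset.notMem_empty b (hd ▸ Finset.mem_inter.2 ⟨hb.1, hmem⟩)
      have hab : a ≠ b := fun heq => hbf 0 (by omega) (heq ▸ ha.1)
      set VP := (Finset.range m).biUnion f with hVPdef
      have haVP : a ∈ VP := Finset.mem_biUnion.2 ⟨0, Finset.mem_range.2 (by omega), ha.1⟩
      have hbVP : b ∈ VP := Finset.mem_biUnion.2 ⟨m-1, Finset.mem_range.2 (by omega), hb.1⟩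
      have hVPV : VP ⊆ V := by
        intro x hx
        obtain ⟨i, hi, hxi⟩ := Finset.mem_biUnion.1 hx
        exact (hKe (f i) (hfK i (Finset.mem_range.1 hi))).1 hxi
      have hsum3 : (∑ i ∈ Finset.range m, (f i).card) ≤ 3 * m := by
        calc ∑ i ∈ Finset.range m, (f i).card ≤ ∑ i ∈ Finset.range m, 3 :=
              Finset.sum_le_sum (fun i hi => (hKe (f i) (hfK i (Finset.mem_range.1 hi))).2.2)
          _ = 3 * m := by simp [Nat.mul_comm]
      have hVPcard : VP.card ≤ 2 * m + 1 := by
        have hpu := path_union_card hf.2.1 m (le_refl m)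
        rw [← hVPdef] at hpu
        omega
      have hfVP : ∀ i < m, f i ⊆ VP :=
        fun i hi => Finset.subset_biUnion_of_mem f (Finset.mem_range.2 hi)
      have hprep : ∀ h ∈ K, h ∩ VP = {a} → False := by
        intro h hh hha
        have hah : a ∈ h := by
          have : a ∈ h ∩ VP := by rw [hha]; exact Finset.mem_singleton_self a
          exact (Finset.mem_inter.1 this).1
        refine hmax ⟨fun j => if j = 0 then h else f (j - 1), ⟨?_, ?_, ?_, ?_⟩, ?_⟩
        · intro i hi
          by_cases h0 : i = 0
          · simpa [h0] using (hKe h hh).2.1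
          · simp only [if_neg h0]
            exact hf.1 (i-1) (by omega)
        · intro i hi
          by_cases h0 : i = 0
          · subst h0
            show ((if (0:ℕ) = 0 then h else f (0-1)) ∩
              (if (0:ℕ)+1 = 0 then h else f (0+1-1))).Nonempty
            rw [if_pos rfl, if_neg (show ¬(0:ℕ)+1 = 0 by omega)]
            exact ⟨a, Finset.mem_inter.2 ⟨hah, by simpa using ha.1⟩⟩
          · simp only [if_neg h0, if_neg (show ¬ i+1 = 0 by omega)]
            have heq : i + 1 - 1 = (i - 1) + 1 := by omega
            rw [heq]
            exact hf.2.1 (i-1) (by omega)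
        · intro i hi j hj hij hne
          by_cases h0 : i = 0
          · subst h0
            simp only [if_pos rfl, if_neg (show ¬ j = 0 by omega)]
            refine Finset.eq_empty_of_forall_notMem (fun x hx => ?_)
            rw [Finset.mem_inter] at hx
            have hxa : x = a := by
              have hxm : x ∈ h ∩ VP := Finset.mem_inter.2 ⟨hx.1, hfVP (j-1) (by omega) hx.2⟩
              rw [hha] at hxm
              exact Finset.mem_singleton.1 hxm
            subst hxa
            exact haf (j-1) (by omega) (by omega) hx.2
          · simp only [if_neg h0, if_neg (show ¬ j = 0 by omega)]
            exact hf.2.2.1 (i-1) (by omega) (j-1) (by omega) (by omega) (by omega)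
        · intro i hi j hj hij
          have key2 : ∀ x y, x < m+1 → y < m+1 → x < y → ((if x = 0 then h else f (x-1)) ∩
              (if y = 0 then h else f (y-1))).card ≤ 1 := by
            intro x y hx hy hxy
            by_cases h0 : x = 0
            · subst h0
              rw [if_pos rfl, if_neg (show ¬ y = 0 by omega)]
              have hsub : h ∩ f (y-1) ⊆ {a} := by
                intro z hz
                rw [Finset.mem_inter] at hz
                rw [← hha]
                exact Finset.mem_inter.2 ⟨hz.1, hfVP (y-1) (by omega) hz.2⟩
              exact le_trans (Finset.card_le_card hsub) (by simp)
            · rw [if_neg h0, if_neg (show ¬ y = 0 by omega)]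
              exact hf.2.2.2 (x-1) (by omega) (y-1) (by omega) (by omega)
          rcases lt_or_gt_of_ne hij with hlt | hlt
          · exact key2 i j hi hj hlt
          · rw [Finset.inter_comm]; exact key2 j i hj hi hlt
        · intro i hi
          by_cases h0 : i = 0
          · simpa [h0] using hh
          · simp only [if_neg h0]
            exact hfK (i-1) (by omega)
      have happ : ∀ h ∈ K, h ∩ VP = {b} → False := by
        intro h hh hhb
        have hbh : b ∈ h := by
          have : b ∈ h ∩ VP := by rw [hhb]; exact Finset.mem_singleton_self b
          exact (Finset.mem_inter.1 this).1
        refine hmax ⟨fun j => if j < m then f j else h, ⟨?_, ?_, ?_, ?_⟩, ?_⟩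
        · intro i hi
          by_cases h0 : i < m
          · simp only [if_pos h0]; exact hf.1 i h0
          · simp only [if_neg h0]; exact (hKe h hh).2.1
        · intro i hi
          by_cases h0 : i + 1 < m
          · simp only [if_pos (show i < m by omega), if_pos h0]
            exact hf.2.1 i h0
          · have him : i = m - 1 := by omega
            simp only [if_pos (show i < m by omega), if_neg (show ¬ i + 1 < m by omega)]
            exact ⟨b, Finset.mem_inter.2 ⟨by rw [him]; exact hb.1, hbh⟩⟩
        · intro i hi j hj hij hne
          by_cases hjm : j < m
          · simp only [if_pos (show i < m by omega), if_pos hjm]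
            exact hf.2.2.1 i (by omega) j hjm hij hne
          · simp only [if_pos (show i < m by omega), if_neg (show ¬ j < m by omega)]
            refine Finset.eq_empty_of_forall_notMem (fun x hx => ?_)
            rw [Finset.mem_inter] at hx
            have hxb : x = b := by
              have hxm : x ∈ h ∩ VP := Finset.mem_inter.2 ⟨hx.2, hfVP i (by omega) hx.1⟩
              rw [hhb] at hxm
              exact Finset.mem_singleton.1 hxm
            subst hxb
            exact hbf i (by omega) hx.1
        · intro i hi j hj hij
          have key2 : ∀ x y, x < m+1 → y < m+1 → x < y → ((if x < m then f x else h) ∩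
              (if y < m then f y else h)).card ≤ 1 := by
            intro x y hx hy hxy
            by_cases hym : y < m
            · simp only [if_pos (show x < m by omega), if_pos hym]
              exact hf.2.2.2 x (by omega) y hym (by omega)
            · simp only [if_pos (show x < m by omega), if_neg hym]
              have hsub : f x ∩ h ⊆ {b} := by
                intro z hz
                rw [Finset.mem_inter] at hz
                rw [← hhb]
                exact Finset.mem_inter.2 ⟨hz.2, hfVP x (by omega) hz.1⟩
              exact le_trans (Finset.card_le_card hsub) (by simp)
          rcases lt_or_gt_of_ne hij with hlt | hlt
          · exact key2 i j hi hj hlt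
          · rw [Finset.inter_comm]; exact key2 j i hj hi hlt
        · intro i hi
          by_cases h0 : i < m
          · simp only [if_pos h0]; exact hfK i h0
          · simp only [if_neg h0]; exact hh
      by_cases hbadq : ∃ q ∈ K, q ∩ VP = {a, b}
      · -- a closing edge exists: cycle case
        obtain ⟨q, hqK, hq⟩ := hbadq
        have haq : a ∈ q := by
          have h' : a ∈ q ∩ VP := by rw [hq]; exact Finset.mem_insert_self a _
          exact (Finset.mem_inter.1 h').1
        have hbq : b ∈ q := by
          have h' : b ∈ q ∩ VP := by
            rw [hq]; exact Finset.mem_insert_of_mem (Finset.mem_singleton_self b)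
          exact (Finset.mem_inter.1 h').1
        have hqsub : ∀ j < m, q ∩ f j ⊆ {a, b} := by
          intro j hj x hx
          rw [Finset.mem_inter] at hx
          rw [← hq]
          exact Finset.mem_inter.2 ⟨hx.1, hfVP j hj hx.2⟩
        have hqf0 : q ∩ f 0 = {a} := by
          apply Finset.Subset.antisymm
          · intro x hx
            rcases Finset.mem_insert.1 (hqsub 0 (by omega) hx) with rfl | hx'
            · exact Finset.mem_singleton_self _
            · rw [Finset.mem_singleton] at hx'; subst hx'
              exact absurd (Finset.mem_inter.1 hx).2 (hbf 0 (by omega))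
          · intro x hx
            rw [Finset.mem_singleton] at hx; subst hx
            exact Finset.mem_inter.2 ⟨haq, ha.1⟩
        have hqfm : q ∩ f (m-1) = {b} := by
          apply Finset.Subset.antisymm
          · intro x hx
            rcases Finset.mem_insert.1 (hqsub (m-1) (by omega) hx) with rfl | hx'
            · exact absurd (Finset.mem_inter.1 hx).2 (haf (m-1) (by omega) (by omega))
            · exact hx'
          · intro x hx
            rw [Finset.mem_singleton] at hx; subst hx
            exact Finset.mem_inter.2 ⟨hbq, hb.1⟩
        have hqmid : ∀ j, 1 ≤ j → j + 1 < m → q ∩ f j = ∅ := by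
          intro j h1 hj
          refine Finset.eq_empty_of_forall_notMem (fun x hx => ?_)
          rcases Finset.mem_insert.1 (hqsub j (by omega) hx) with rfl | hx'
          · exact haf j h1 (by omega) (Finset.mem_inter.1 hx).2
          · rw [Finset.mem_singleton] at hx'; subst hx'
            exact hbf j (by omega) (Finset.mem_inter.1 hx).2
        set c := m + 1 with hcdef
        set g : ℕ → Finset α := fun j => if j < m then f j else q with hgdef
        have hgf : ∀ j < m, g j = f j := fun j hj => if_pos hj
        have hgm : g m = q := if_neg (lt_irrefl m)
        have hgK : ∀ j < c, g j ∈ K := by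
          intro j hj
          by_cases h0 : j < m
          · rw [hgf j h0]; exact hfK j h0
          · rw [show j = m by omega, hgm]; exact hqK
        have hgcard : ∀ i < c, 2 ≤ (g i).card := fun i hi => (hKe (g i) (hgK i hi)).2.1
        have hmodm : (m + 1) % c = 0 := by rw [hcdef]; exact Nat.mod_self _
        have hmodlt : ∀ i, i < c → (i + 1) % c = if i = m then 0 else i + 1 := by
          intro i hi
          by_cases h0 : i = m
          · rw [if_pos h0, h0]; exact hmodm
          · rw [if_neg h0]; exact Nat.mod_eq_of_lt (by omega)
        have hadjg : ∀ i < c, (g i ∩ g ((i + 1) % c)).card = 1 := by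
          intro i hi
          rw [hmodlt i hi]
          by_cases h0 : i = m
          · rw [if_pos h0, h0, hgm, hgf 0 (by omega), hqf0]
            exact Finset.card_singleton a
          · rw [if_neg h0]
            by_cases h1 : i = m - 1
            · rw [h1, hgf (m-1) (by omega), show m - 1 + 1 = m by omega, hgm,
                Finset.inter_comm, hqfm]
              exact Finset.card_singleton b
            · rw [hgf i (by omega), hgf (i+1) (by omega)]
              exact path_adj_card hf i (by omega)
        have hdisjg : ∀ i < c, ∀ j < c, j ≠ i → j ≠ (i + 1) % c → i ≠ (j + 1) % c →
            g i ∩ g j = ∅ := by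
          intro i hi j hj h1 h2 h3
          rw [hmodlt i hi] at h2
          rw [hmodlt j hj] at h3
          by_cases him : i = m
          · rw [him, hgm, hgf j (by omega)]
            rw [if_pos him] at h2
            rw [if_neg (show ¬ j = m by omega)] at h3
            exact hqmid j (by omega) (by omega)
          · by_cases hjm : j = m
            · rw [hjm, hgf i (by omega), hgm, Finset.inter_comm]
              rw [if_neg him] at h2
              rw [if_pos hjm] at h3
              exact hqmid i (by omega) (by omega)
            · rw [hgf i (by omega), hgf j (by omega)]
              rw [if_neg him] at h2
              rw [if_neg hjm] at h3
              exact path_disj hf i (by omega) j (by omega) (fun hh => h1 hh.symm) h2 h3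
        have hconng : ∀ i < c, ∀ j < c, i ≠ j →
            (g i ∩ g ((i + 1) % c)) ∩ (g j ∩ g ((j + 1) % c)) = ∅ := by
          have key3 : ∀ i j, i < j → j < c →
              (g i ∩ g ((i + 1) % c)) ∩ (g j ∩ g ((j + 1) % c)) = ∅ := by
            intro i j hij hj
            refine Finset.eq_empty_of_forall_notMem (fun x hx => ?_)
            rw [Finset.mem_inter, Finset.mem_inter, Finset.mem_inter] at hx
            obtain ⟨⟨hx1, hx2⟩, hx3, hx4⟩ := hx
            by_cases hjm : j = m
            · have hxa : x = a := by
                have hmem : x ∈ q ∩ f 0 := by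
                  rw [hmodlt j hj, if_pos hjm] at hx4
                  rw [hjm, hgm] at hx3
                  rw [hgf 0 (by omega)] at hx4
                  exact Finset.mem_inter.2 ⟨hx3, hx4⟩
                rw [hqf0] at hmem; exact Finset.mem_singleton.1 hmem
              subst hxa
              rw [hmodlt i (by omega), if_neg (show ¬ i = m by omega)] at hx2
              by_cases hi1 : i + 1 = m
              · rw [hgf i (by omega)] at hx1
                exact haf i (by omega) (by omega) hx1
              · rw [hgf (i+1) (by omega)] at hx2
                exact haf (i+1) (by omega) (by omega) hx2
            · by_cases hjm1 : j = m - 1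
              · have hxb : x = b := by
                  have hmem : x ∈ q ∩ f (m-1) := by
                    rw [hmodlt j hj, if_neg hjm, show j + 1 = m by omega, hgm] at hx4
                    rw [hgf j (by omega), hjm1] at hx3
                    exact Finset.mem_inter.2 ⟨hx4, hx3⟩
                  rw [hqfm] at hmem; exact Finset.mem_singleton.1 hmem
                subst hxb
                rw [hgf i (by omega)] at hx1
                exact hbf i (by omega) hx1
              · rw [hgf j (by omega)] at hx3
                rw [hmodlt j hj, if_neg hjm, hgf (j+1) (by omega)] at hx4
                rw [hgf i (by omega)] at hx1
                rw [hmodlt i (by omega), if_neg (show ¬ i = m by omega),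
                  hgf (i+1) (by omega)] at hx2
                by_cases hji : j = i + 1
                · have hd := path_disj hf i (by omega) (j+1) (by omega) (by omega)
                    (by omega) (by omega)
                  exact Finset.notMem_empty x (hd ▸ Finset.mem_inter.2 ⟨hx1, hx4⟩)
                · have hd := path_disj hf i (by omega) j (by omega) (by omega)
                    (by omega) (by omega)
                  exact Finset.notMem_empty x (hd ▸ Finset.mem_inter.2 ⟨hx1, hx3⟩)
          intro i hi j hj hij
          rcases lt_or_gt_of_ne hij with hlt | hlt
          · exact key3 i j hlt hj
          · rw [Finset.inter_comm]; exact key3 j i hlt hi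
        have hqVPcard : (q ∩ VP).card = 2 := by
          rw [hq, Finset.card_insert_of_notMem (by simpa using hab), Finset.card_singleton]
        have hWV : VP ∪ q ⊆ V := Finset.union_subset hVPV (hKe q hqK).1
        have hgW : ∀ j < c, g j ⊆ VP ∪ q := by
          intro j hj
          by_cases h0 : j < m
          · rw [hgf j h0]; exact (hfVP j h0).trans Finset.subset_union_left
          · rw [show j = m by omega, hgm]; exact Finset.subset_union_right
        have hWcard : (VP ∪ q).card + 2 = VP.card + q.card := by
          have hcu := Finset.card_union_add_card_inter VP q
          rw [Finset.inter_comm] at hqVPcard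
          omega
        have hrot : ∀ h ∈ K, ∀ s, s < c → (h ∩ g s).card = 1 →
            (∀ j < c, j ≠ s → (j + 1) % c ≠ s → h ∩ g j = ∅) → False := by
          intro h hh s hs hhs hother
          have hpath := rotation (by omega) g hgcard hadjg hdisjg h (hKe h hh).2.1 s hs
            hhs hother
          refine hmax ⟨_, hpath, ?_⟩
          intro i hi
          by_cases h0 : i = 0
          · simpa [h0] using hh
          · simp only [if_neg h0]
            exact hgK _ (Nat.mod_lt _ (by omega))
        by_cases hEx : ∃ p, p < c ∧ (g p).card = 3
        · obtain ⟨p, hpc, hp3⟩ := hEx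
          have hpnc : (p + 1) % c < c := Nat.mod_lt _ (by omega)
          set pm := if p = 0 then m else p - 1 with hpmdef
          have hpmc : pm < c := by rw [hpmdef]; split <;> omega
          have hpm1 : (pm + 1) % c = p := by
            rw [hpmdef]
            by_cases h0 : p = 0
            · rw [if_pos h0, h0]; exact hmodm
            · rw [if_neg h0, show p - 1 + 1 = p by omega]
              exact Nat.mod_eq_of_lt (by omega)
          have hpnp : (p + 1) % c ≠ p := by
            rw [hmodlt p hpc]
            split <;> omega
          have hpmp : pm ≠ p := by rw [hpmdef]; split <;> omega
          have hpmpn : pm ≠ (p + 1) % c := by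
            rw [hmodlt p hpc, hpmdef]
            split <;> split <;> omega
          obtain ⟨v, hv⟩ := Finset.card_eq_one.1 (hadjg p hpc)
          have hvp : v ∈ g p := by
            have hmem : v ∈ g p ∩ g ((p+1) % c) := by rw [hv]; exact Finset.mem_singleton_self v
            exact (Finset.mem_inter.1 hmem).1
          have hvpn : v ∈ g ((p+1) % c) := by
            have hmem : v ∈ g p ∩ g ((p+1) % c) := by rw [hv]; exact Finset.mem_singleton_self v
            exact (Finset.mem_inter.1 hmem).2
          have hadjpm : (g pm ∩ g p).card = 1 := by
            have h' := hadjg pm hpmc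
            rwa [hpm1] at h'
          have hwex : (g p \ (g pm ∪ g ((p+1) % c))).Nonempty := by
            have hsub : g p ∩ (g pm ∪ g ((p+1) % c)) ⊆ (g pm ∩ g p) ∪ (g p ∩ g ((p+1) % c)) := by
              intro x hx
              rw [Finset.mem_inter, Finset.mem_union] at hx
              rcases hx.2 with h' | h'
              · exact Finset.mem_union_left _ (Finset.mem_inter.2 ⟨h', hx.1⟩)
              · exact Finset.mem_union_right _ (Finset.mem_inter.2 ⟨hx.1, h'⟩)
            have hle : (g p ∩ (g pm ∪ g ((p+1) % c))).card ≤ 2 := by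
              calc (g p ∩ (g pm ∪ g ((p+1) % c))).card
                  ≤ ((g pm ∩ g p) ∪ (g p ∩ g ((p+1) % c))).card := Finset.card_le_card hsub
                _ ≤ (g pm ∩ g p).card + (g p ∩ g ((p+1) % c)).card := Finset.card_union_le _ _
                _ ≤ 2 := by rw [hadjpm, hadjg p hpc]
            have hcs := Finset.card_sdiff_add_card_inter (g p) (g pm ∪ g ((p+1) % c))
            refine Finset.card_pos.1 ?_
            omega
          obtain ⟨w, hw⟩ := hwex
          rw [Finset.mem_sdiff, Finset.mem_union] at hw
          have hw1 : w ∈ g p := hw.1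
          have hwpm : w ∉ g pm := fun h' => hw.2 (Or.inl h')
          have hwpn : w ∉ g ((p+1) % c) := fun h' => hw.2 (Or.inr h')
          have hvloc : ∀ j < c, v ∈ g j → j = p ∨ j = (p + 1) % c := by
            intro j hj hvj
            exact cycle_locality g hdisjg hconng hpc
              (by rw [hv]; exact Finset.mem_singleton_self v) j hj hvj
          have hwloc : ∀ j < c, w ∈ g j → j = p :=
            cycle_passenger g hdisjg hpc hpmc hpm1 hw1 hwpn hwpm
          have hwv : w ≠ v := fun heq => hwpn (heq ▸ hvpn)
          refine step (VP ∪ q) {w, v} hWV ⟨a, Finset.mem_union_left _ haVP⟩ ?_ ?_ ?_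
          · intro x hx
            rcases Finset.mem_insert.1 hx with rfl | hx
            · exact hgW p hpc hw1
            · rw [Finset.mem_singleton] at hx; subst hx; exact hgW p hpc hvp
          · have hAc : ({w, v} : Finset α).card = 2 := by
              rw [Finset.card_insert_of_notMem (by simpa using hwv), Finset.card_singleton]
            rw [hAc]
            have h3q := (hKe q hqK).2.2
            omega
          · intro h hh hsub
            by_contra hne
            obtain ⟨z, hz⟩ := Finset.nonempty_iff_ne_empty.2 hne
            by_cases hvh : v ∈ h
            · refine hrot h hh ((p+1) % c) hpnc ?_ ?_
              · have heq : h ∩ g ((p+1) % c) = {v} := by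
                  apply Finset.Subset.antisymm
                  · intro x hx'
                    rw [Finset.mem_inter] at hx'
                    have hxW : x ∈ h ∩ (VP ∪ q) :=
                      Finset.mem_inter.2 ⟨hx'.1, hgW _ hpnc hx'.2⟩
                    rcases Finset.mem_insert.1 (hsub hxW) with rfl | hxv
                    · exact absurd hx'.2 hwpn
                    · exact hxv
                  · intro x hx'
                    rw [Finset.mem_singleton] at hx'; subst hx'
                    exact Finset.mem_inter.2 ⟨hvh, hvpn⟩
                rw [heq]; exact Finset.card_singleton v
              · intro j hj hjne hjne2
                refine Finset.eq_empty_of_forall_notMem (fun x hx' => ?_)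
                rw [Finset.mem_inter] at hx'
                have hxW : x ∈ h ∩ (VP ∪ q) := Finset.mem_inter.2 ⟨hx'.1, hgW j hj hx'.2⟩
                rcases Finset.mem_insert.1 (hsub hxW) with rfl | hxv
                · have hjp := hwloc j hj hx'.2
                  exact hjne2 (by rw [hjp])
                · rw [Finset.mem_singleton] at hxv; subst hxv
                  rcases hvloc j hj hx'.2 with h' | h'
                  · exact hjne2 (by rw [h'])
                  · exact hjne h'
            · have hwh : w ∈ h := by
                rcases Finset.mem_insert.1 (hsub hz) with rfl | hz'
                · exact (Finset.mem_inter.1 hz).1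
                · rw [Finset.mem_singleton] at hz'; subst hz'
                  exact absurd (Finset.mem_inter.1 hz).1 hvh
              refine hrot h hh p hpc ?_ ?_
              · have heq : h ∩ g p = {w} := by
                  apply Finset.Subset.antisymm
                  · intro x hx'
                    rw [Finset.mem_inter] at hx'
                    have hxW : x ∈ h ∩ (VP ∪ q) :=
                      Finset.mem_inter.2 ⟨hx'.1, hgW p hpc hx'.2⟩
                    rcases Finset.mem_insert.1 (hsub hxW) with rfl | hxv
                    · exact Finset.mem_singleton_self _
                    · rw [Finset.mem_singleton] at hxv; subst hxv
                      exact absurd hx'.1 hvh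
                  · intro x hx'
                    rw [Finset.mem_singleton] at hx'; subst hx'
                    exact Finset.mem_inter.2 ⟨hwh, hw1⟩
                rw [heq]; exact Finset.card_singleton w
              · intro j hj hjne hjne2
                refine Finset.eq_empty_of_forall_notMem (fun x hx' => ?_)
                rw [Finset.mem_inter] at hx'
                have hxW : x ∈ h ∩ (VP ∪ q) := Finset.mem_inter.2 ⟨hx'.1, hgW j hj hx'.2⟩
                rcases Finset.mem_insert.1 (hsub hxW) with rfl | hxv
                · exact hjne (hwloc j hj hx'.2)
                · rw [Finset.mem_singleton] at hxv; subst hxv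
                  exact absurd hx'.1 hvh
        · push_neg at hEx
          have hg2 : ∀ p, p < c → (g p).card = 2 := by
            intro p hp
            have h1 := hgcard p hp
            have h3 := (hKe (g p) (hgK p hp)).2.2
            have h2 := hEx p hp
            omega
          have hsum2 : (∑ i ∈ Finset.range m, (f i).card) = 2 * m := by
            have hcongr : ∀ i ∈ Finset.range m, (f i).card = 2 := by
              intro i hi
              have him := Finset.mem_range.1 hi
              rw [← hgf i him]
              exact hg2 i (by omega)
            rw [Finset.sum_congr rfl hcongr, Finset.sum_const, Finset.card_range,
              smul_eq_mul, Nat.mul_comm]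
          have hVP2 : VP.card ≤ m + 1 := by
            have hpu := path_union_card hf.2.1 m (le_refl m)
            rw [← hVPdef] at hpu
            omega
          have hq2 : q.card = 2 := by rw [← hgm]; exact hg2 m (by omega)
          refine step (VP ∪ q) {a} hWV ⟨a, Finset.mem_union_left _ haVP⟩
            (Finset.singleton_subset_iff.2 (Finset.mem_union_left _ haVP)) ?_ ?_
          · rw [Finset.card_singleton]
            omega
          · intro h hh hsub
            by_contra hne
            obtain ⟨z, hz⟩ := Finset.nonempty_iff_ne_empty.2 hne
            have hza : z = a := Finset.mem_singleton.1 (hsub hz)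
            subst hza
            have hah : z ∈ h := (Finset.mem_inter.1 hz).1
            have hamem : z ∈ g m ∩ g ((m + 1) % c) := by
              rw [hmodm]
              refine Finset.mem_inter.2 ⟨?_, ?_⟩
              · rw [hgm]; exact haq
              · rw [hgf 0 (by omega)]; exact ha.1
            refine hrot h hh 0 (by omega) ?_ ?_
            · have heq : h ∩ g 0 = {z} := by
                apply Finset.Subset.antisymm
                · intro x hx'
                  rw [Finset.mem_inter] at hx'
                  exact hsub (Finset.mem_inter.2 ⟨hx'.1, hgW 0 (by omega) hx'.2⟩)
                · intro x hx'
                  rw [Finset.mem_singleton] at hx'; subst hx'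
                  refine Finset.mem_inter.2 ⟨hah, ?_⟩
                  rw [hgf 0 (by omega)]; exact ha.1
              rw [heq]; exact Finset.card_singleton z
            · intro j hj hjne hjne2
              refine Finset.eq_empty_of_forall_notMem (fun x hx' => ?_)
              rw [Finset.mem_inter] at hx'
              have hxa : x = z :=
                Finset.mem_singleton.1 (hsub (Finset.mem_inter.2 ⟨hx'.1, hgW j hj hx'.2⟩))
              subst hxa
              rcases cycle_locality g hdisjg hconng (show m < c by omega) hamem j hj hx'.2
                with h' | h'
              · rw [h'] at hjne2
                exact hjne2 hmodm
              · rw [hmodm] at h'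
                exact hjne h'

      · -- no closing edge: keep both endpoints
        refine step VP {a, b} hVPV ⟨a, haVP⟩ ?_ ?_ ?_
        · intro x hx
          rcases Finset.mem_insert.1 hx with rfl | hx
          · exact haVP
          · rw [Finset.mem_singleton] at hx; subst hx; exact hbVP
        · have hAc : ({a, b} : Finset α).card = 2 := by
            rw [Finset.card_insert_of_notMem (by simpa using hab), Finset.card_singleton]
          rw [hAc]; omega
        · intro h hh hsub
          by_contra hne
          obtain ⟨z, hz⟩ := Finset.nonempty_iff_ne_empty.2 hne
          by_cases hah : a ∈ h <;> by_cases hbh : b ∈ h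
          · refine hbadq ⟨h, hh, Finset.Subset.antisymm hsub ?_⟩
            intro x hx
            rcases Finset.mem_insert.1 hx with rfl | hx
            · exact Finset.mem_inter.2 ⟨hah, haVP⟩
            · rw [Finset.mem_singleton] at hx; subst hx
              exact Finset.mem_inter.2 ⟨hbh, hbVP⟩
          · refine hprep h hh (Finset.Subset.antisymm ?_ ?_)
            · intro x hx
              rcases Finset.mem_insert.1 (hsub hx) with rfl | hx'
              · exact Finset.mem_singleton_self _
              · rw [Finset.mem_singleton] at hx'; subst hx'
                exact absurd (Finset.mem_inter.1 hx).1 hbh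
            · intro x hx
              rw [Finset.mem_singleton] at hx; subst hx
              exact Finset.mem_inter.2 ⟨hah, haVP⟩
          · refine happ h hh (Finset.Subset.antisymm ?_ ?_)
            · intro x hx
              rcases Finset.mem_insert.1 (hsub hx) with rfl | hx'
              · exact absurd (Finset.mem_inter.1 hx).1 hah
              · exact hx'
            · intro x hx
              rw [Finset.mem_singleton] at hx; subst hx
              exact Finset.mem_inter.2 ⟨hbh, hbVP⟩
          · rcases Finset.mem_insert.1 (hsub hz) with rfl | hz'
            · exact hah (Finset.mem_inter.1 hz).1
            · rw [Finset.mem_singleton] at hz'; subst hz'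
              exact hbh (Finset.mem_inter.1 hz).1

lemma choice_fun (I : Finset ℕ) (T : ℕ → Finset α) (F : ℕ → Finset α)
    (hT : ∀ i ∈ I, (F i).card + I.card ≤ (T i).card) :
    ∃ w : ℕ → Finset α, (∀ i, i ∉ I → w i = ∅) ∧
      (∀ i ∈ I, ∃ x, w i = {x} ∧ x ∈ T i ∧ x ∉ F i) ∧
      (∀ i ∈ I, ∀ j ∈ I, i ≠ j → w i ∩ w j = ∅) := by
  classical
  induction I using Finset.induction_on with
  | empty => exact ⟨fun _ => ∅, fun _ _ => rfl, fun i hi => absurd hi (by simp),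
      fun i hi => absurd hi (by simp)⟩
  | @insert a I ha ih =>
    obtain ⟨w, hw0, hw1, hw2⟩ := ih (fun i hi => by
      have := hT i (Finset.mem_insert_of_mem hi)
      have hcard : I.card ≤ (insert a I).card := Finset.card_le_card (Finset.subset_insert _ _)
      omega)
    have hUcard : (I.biUnion w).card ≤ I.card := by
      calc (I.biUnion w).card ≤ ∑ i ∈ I, (w i).card := Finset.card_biUnion_le
        _ ≤ ∑ i ∈ I, 1 := Finset.sum_le_sum (fun i hi => by
            obtain ⟨x, hx, _, _⟩ := hw1 i hi
            simp [hx])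
        _ = I.card := by simp
    have hpick : (T a \ (F a ∪ I.biUnion w)).Nonempty := by
      have h1 : (F a ∪ I.biUnion w).card ≤ (F a).card + I.card :=
        le_trans (Finset.card_union_le _ _) (by omega)
      have h2 := hT a (Finset.mem_insert_self a I)
      have h3 : (insert a I).card = I.card + 1 := by
        rw [Finset.card_insert_of_notMem ha]
      have := Finset.le_card_sdiff (F a ∪ I.biUnion w) (T a)
      refine Finset.card_pos.1 ?_
      omega
    obtain ⟨x, hx⟩ := hpick
    rw [Finset.mem_sdiff, Finset.mem_union] at hx
    refine ⟨fun i => if i = a then {x} else w i, ?_, ?_, ?_⟩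
    · intro i hi
      rw [Finset.mem_insert, not_or] at hi
      show (if i = a then ({x} : Finset α) else w i) = ∅
      rw [if_neg hi.1]
      exact hw0 i hi.2
    · intro i hi
      rcases Finset.mem_insert.1 hi with rfl | hi'
      · refine ⟨x, ?_, hx.1, fun hF => hx.2 (Or.inl hF)⟩
        show (if i = i then ({x} : Finset α) else w i) = {x}
        rw [if_pos rfl]
      · obtain ⟨y, hy⟩ := hw1 i hi'
        refine ⟨y, ?_, hy.2.1, hy.2.2⟩
        show (if i = a then ({x} : Finset α) else w i) = {y}
        rw [if_neg (by rintro rfl; exact ha hi')]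
        exact hy.1
    · intro i hi j hj hij
      show (if i = a then ({x} : Finset α) else w i) ∩
          (if j = a then ({x} : Finset α) else w j) = ∅
      rcases Finset.mem_insert.1 hi with rfl | hi' <;> rcases Finset.mem_insert.1 hj with h' | hj'
      · exact absurd h'.symm hij
      · rw [if_pos rfl, if_neg (by rintro rfl; exact ha hj')]
        refine Finset.eq_empty_of_forall_notMem (fun z hz => ?_)
        rw [Finset.mem_inter, Finset.mem_singleton] at hz
        obtain ⟨rfl, hz2⟩ := hz
        exact hx.2 (Or.inr (Finset.mem_biUnion.2 ⟨j, hj', hz2⟩))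
      · subst h'
        rw [if_neg (by rintro rfl; exact ha hi'), if_pos rfl]
        refine Finset.eq_empty_of_forall_notMem (fun z hz => ?_)
        rw [Finset.mem_inter, Finset.mem_singleton] at hz
        obtain ⟨hz1, rfl⟩ := hz
        exact hx.2 (Or.inr (Finset.mem_biUnion.2 ⟨i, hi', hz1⟩))
      · rw [if_neg (by rintro rfl; exact ha hi'), if_neg (by rintro rfl; exact ha hj')]
        exact hw2 i hi' j hj' hij

theorem no_long_path (l : ℕ) (hl : 3 ≤ l)
    (H : Finset (Finset α)) (h3 : ∀ e ∈ H, e.card = 3)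
    (hfree : ¬ ContainsUniformLooseCycle 3 l (↑H : Set (Finset α)))
    (X Y : Finset α) (hXY : IsExtender l H X Y)
    (f : ℕ → Finset α) (hf : IsSimplePathOn (l - 2) f)
    (hfe : ∀ i < l - 2, f i ⊆ X ∧ (EdgeLight l H (f i) ∨ PairHeavy l H (f i))) : False := by
  classical
  set k := l - 2 with hkdef
  have hk1 : 1 ≤ k := by omega
  have hlk : l = k + 2 := by omega
  -- basic card facts
  have hHev : ∀ i < k, (f i).card = 2 → PairHeavy l H (f i) := by
    intro i hi h2
    rcases (hfe i hi).2 with hL | hP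
    · have := h3 _ hL.1; omega
    · exact hP
  have hHmem : ∀ i < k, (f i).card ≠ 2 → f i ∈ H ∧ (f i).card = 3 := by
    intro i hi h2
    rcases (hfe i hi).2 with hL | hP
    · exact ⟨hL.1, h3 _ hL.1⟩
    · exact absurd hP.1 h2
  have hcard23 : ∀ i < k, (f i).card = 2 ∨ (f i).card = 3 := by
    intro i hi
    by_cases h2 : (f i).card = 2
    · exact Or.inl h2
    · exact Or.inr (hHmem i hi h2).2
  -- endpoints
  obtain ⟨a, b, ha0, hbk, hab, haf, hbf⟩ :
      ∃ a b : α, a ∈ f 0 ∧ b ∈ f (k - 1) ∧ a ≠ b ∧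
        (∀ j, 1 ≤ j → j < k → a ∉ f j) ∧ (∀ j, j < k - 1 → b ∉ f j) := by
    rcases Nat.lt_or_ge k 2 with hk2 | hk2
    · have hk1' : k = 1 := by omega
      obtain ⟨a, ha, b, hb, hab⟩ := Finset.one_lt_card.1
        (show 1 < (f 0).card from by have := hf.1 0 (by omega); omega)
      exact ⟨a, b, ha, by rwa [show k - 1 = 0 by omega], hab,
        fun j h1 hj => absurd hj (by omega), fun j hj => absurd hj (by omega)⟩
    · have hf01 : (f 0 ∩ f 1).card ≤ 1 := hf.2.2.2 0 (by omega) 1 (by omega) (by omega)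
      have ha' : (f 0 \ f 1).Nonempty := by
        rw [Finset.sdiff_nonempty]
        intro hsub
        have heq : f 0 ∩ f 1 = f 0 := by rw [Finset.inter_eq_left]; exact hsub
        have h2 := hf.1 0 (by omega)
        rw [heq] at hf01; omega
      obtain ⟨a, ha⟩ := ha'
      rw [Finset.mem_sdiff] at ha
      have hfm : (f (k-1) ∩ f (k-2)).card ≤ 1 :=
        hf.2.2.2 (k-1) (by omega) (k-2) (by omega) (by omega)
      have hb' : (f (k-1) \ f (k-2)).Nonempty := by
        rw [Finset.sdiff_nonempty]
        intro hsub
        have heq : f (k-1) ∩ f (k-2) = f (k-1) := by rw [Finset.inter_eq_left]; exact hsub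
        have h2 := hf.1 (k-1) (by omega)
        rw [heq] at hfm; omega
      obtain ⟨b, hb⟩ := hb'
      rw [Finset.mem_sdiff] at hb
      have haf : ∀ j, 1 ≤ j → j < k → a ∉ f j := by
        intro j h1 hj hmem
        rcases Nat.lt_or_ge j 2 with h | h
        · exact ha.2 (by rwa [show j = 1 by omega] at hmem)
        · have hd := path_disj hf 0 (by omega) j hj (by omega) (by omega) (by omega)
          exact Finset.notMem_empty a (hd ▸ Finset.mem_inter.2 ⟨ha.1, hmem⟩)
      have hbf : ∀ j, j < k - 1 → b ∉ f j := by
        intro j hj hmem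
        by_cases h : j = k - 2
        · exact hb.2 (h ▸ hmem)
        · have hd := path_disj hf (k-1) (by omega) j (by omega) (by omega) (by omega) (by omega)
          exact Finset.notMem_empty b (hd ▸ Finset.mem_inter.2 ⟨hb.1, hmem⟩)
      exact ⟨a, b, ha.1, hb.1, fun heq => hbf 0 (by omega) (heq ▸ ha.1), haf, hbf⟩
  -- vertex set of the path
  set VP := (Finset.range k).biUnion f with hVPdef
  have hfVP : ∀ i < k, f i ⊆ VP :=
    fun i hi => Finset.subset_biUnion_of_mem f (Finset.mem_range.2 hi)
  have haVP : a ∈ VP := hfVP 0 (by omega) ha0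
  have hbVP : b ∈ VP := hfVP (k-1) (by omega) hbk
  have hVPX : VP ⊆ X := by
    intro x hx
    obtain ⟨i, hi, hxi⟩ := Finset.mem_biUnion.1 hx
    exact (hfe i (Finset.mem_range.1 hi)).1 hxi
  -- heavy indices
  set hvI := (Finset.range k).filter (fun i => (f i).card = 2) with hvIdef
  have hsumc : (∑ i ∈ Finset.range k, (f i).card) + hvI.card = 3 * k := by
    rw [hvIdef, Finset.card_filter, ← Finset.sum_add_distrib]
    rw [Finset.sum_congr rfl (g := fun _ => 3) (fun i hi => by
      have him := Finset.mem_range.1 hi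
      rcases hcard23 i him with h2 | h2
      · rw [h2]; simp
      · rw [h2]; simp)]
    rw [Finset.sum_const, Finset.card_range, smul_eq_mul, Nat.mul_comm]
  have hVPcard : VP.card + k + hvI.card ≤ 3 * k + 1 := by
    have hpu := path_union_card hf.2.1 k (le_refl k)
    rw [← hVPdef] at hpu
    omega
  have habcard : ({a, b} : Finset α).card = 2 := by
    rw [Finset.card_insert_of_notMem (by simpa using hab), Finset.card_singleton]
  have habVP : ({a, b} : Finset α) ⊆ VP := by
    intro x hx
    rcases Finset.mem_insert.1 hx with rfl | hx
    · exact haVP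
    · rw [Finset.mem_singleton] at hx; subst hx; exact hbVP
  set S := VP \ ({a, b} : Finset α) with hSdef
  have hScount : S.card + 2 = VP.card := by
    rw [hSdef, Finset.card_sdiff_of_subset habVP, habcard]
    have := Finset.card_le_card habVP
    omega
  have hhvk : hvI.card ≤ k := by
    have := Finset.card_filter_le (Finset.range k) (fun i => (f i).card = 2)
    simpa using this
  have hScard : S.card ≤ 2 * l - 5 := by omega
  have hSX : S ⊆ X := fun x hx => hVPX (Finset.mem_sdiff.1 hx).1
  have hSdisj : Disjoint S ({a, b} ∪ Y) := by
    rw [Finset.disjoint_union_right]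
    constructor
    · exact Finset.sdiff_disjoint
    · exact Finset.disjoint_of_subset_left hSX hXY.1
  -- the cherry
  obtain ⟨g, hgjoin, hgH, hgS⟩ := hXY.2.2 a (hVPX haVP) b (hVPX hbVP) hab S hSdisj hScard
  obtain ⟨hgpath, hag0, hbg1, hgnot⟩ := hgjoin
  obtain ⟨hag1, hbg0⟩ := hgnot (le_refl 2)
  have hg0H : g 0 ∈ H := hgH 0 (by omega)
  have hg1H : g 1 ∈ H := hgH 1 (by omega)
  have hg0c : (g 0).card = 3 := h3 _ hg0H
  have hg1c : (g 1).card = 3 := h3 _ hg1H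
  have hg01 : (g 0 ∩ g 1).card = 1 := by
    refine le_antisymm (hgpath.2.2.2 0 (by omega) 1 (by omega) (by omega)) ?_
    exact Finset.card_pos.2 (hgpath.2.1 0 (by omega))
  have hgScap : ∀ t, t < 2 → ∀ x ∈ S, x ∉ g t := by
    intro t ht x hx hmem
    exact Finset.disjoint_right.1 (hgS t ht) hx hmem
  -- third vertices of heavy pairs
  set T : ℕ → Finset α := fun i => (H.filter (fun e => f i ⊆ e)).biUnion (fun e => e \ (f i))
    with hTdef
  have hTeq : ∀ i < k, ∀ e ∈ H, f i ⊆ e → (f i).card = 2 → ∀ x ∈ e \ f i, e = f i ∪ {x} := by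
    intro i hi e he hsube h2 x hx
    rw [Finset.mem_sdiff] at hx
    refine (Finset.eq_of_subset_of_card_le ?_ ?_).symm
    · intro y hy
      rcases Finset.mem_union.1 hy with hy | hy
      · exact hsube hy
      · rw [Finset.mem_singleton] at hy; subst hy; exact hx.1
    · have hcu : (f i ∪ {x}).card = (f i).card + 1 := by
        rw [Finset.union_comm, ← Finset.insert_eq, Finset.card_insert_of_notMem hx.2]
      have := h3 e he
      omega
  have hTcard : ∀ i ∈ hvI, 2 * l - 2 ≤ (T i).card := by
    intro i hi
    rw [hvIdef, Finset.mem_filter, Finset.mem_range] at hi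
    have hheavy := hHev i hi.1 hi.2
    have hd : ∀ e₁ ∈ H.filter (fun e => f i ⊆ e), ∀ e₂ ∈ H.filter (fun e => f i ⊆ e),
        e₁ ≠ e₂ → Disjoint (e₁ \ f i) (e₂ \ f i) := by
      intro e₁ he₁ e₂ he₂ hne
      rw [Finset.mem_filter] at he₁ he₂
      rw [Finset.disjoint_left]
      intro x hx1 hx2
      have h1 := hTeq i hi.1 e₁ he₁.1 he₁.2 hi.2 x hx1
      have h2 := hTeq i hi.1 e₂ he₂.1 he₂.2 hi.2 x hx2
      exact hne (h1.trans h2.symm)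
    have hbu : (T i).card = (H.filter (fun e => f i ⊆ e)).card := by
      rw [hTdef]
      rw [Finset.card_biUnion hd]
      rw [Finset.sum_congr rfl (g := fun _ => 1) (fun e he => by
        rw [Finset.mem_filter] at he
        rw [Finset.card_sdiff_of_subset he.2, h3 e he.1, hi.2])]
      simp
    rw [hbu]
    exact hheavy.2
  have hTmem : ∀ i < k, ∀ x ∈ T i, (f i).card = 2 → (f i ∪ {x} ∈ H ∧ x ∉ f i) := by
    intro i hi x hx h2
    rw [hTdef] at hx
    obtain ⟨e, he, hxe⟩ := Finset.mem_biUnion.1 hx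
    rw [Finset.mem_filter] at he
    have heq := hTeq i hi e he.1 he.2 h2 x hxe
    exact ⟨heq ▸ he.1, (Finset.mem_sdiff.1 hxe).2⟩
  -- forbidden sets
  set Fb : ℕ → Finset α := fun i => (VP \ f i) ∪ ((g 0 ∪ g 1) \ ({a, b} : Finset α))
    with hFbdef
  have hg01card : (g 0 ∪ g 1).card = 5 := by
    have := Finset.card_union_add_card_inter (g 0) (g 1)
    omega
  have habg : ({a, b} : Finset α) ⊆ g 0 ∪ g 1 := by
    intro x hx
    rcases Finset.mem_insert.1 hx with rfl | hx
    · exact Finset.mem_union_left _ hag0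
    · rw [Finset.mem_singleton] at hx; subst hx; exact Finset.mem_union_right _ hbg1
  have hgabcard : ((g 0 ∪ g 1) \ ({a, b} : Finset α)).card = 3 := by
    rw [Finset.card_sdiff_of_subset habg, hg01card, habcard]
  have hFbcard : ∀ i ∈ hvI, (Fb i).card + hvI.card ≤ (T i).card := by
    intro i hi
    have hTc := hTcard i hi
    rw [hvIdef, Finset.mem_filter, Finset.mem_range] at hi
    have hVPfi : (VP \ f i).card + 2 = VP.card := by
      rw [Finset.card_sdiff_of_subset (hfVP i hi.1), hi.2]
      have := Finset.card_le_card (hfVP i hi.1)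
      omega
    have hFble : (Fb i).card ≤ (VP \ f i).card + 3 := by
      rw [hFbdef]
      calc ((VP \ f i) ∪ ((g 0 ∪ g 1) \ ({a, b} : Finset α))).card
          ≤ (VP \ f i).card + ((g 0 ∪ g 1) \ ({a, b} : Finset α)).card :=
            Finset.card_union_le _ _
        _ = (VP \ f i).card + 3 := by rw [hgabcard]
    -- VP.card ≤ 2k + 1 - hvI.card ; so Fb i ≤ 2k + 2 - hvI.card ; total ≤ 2k+2 = 2l-2
    omega
  obtain ⟨w, hw0, hw1, hw2⟩ := choice_fun hvI T Fb hFbcard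
  -- properties of the extended edges
  have hwprop : ∀ i < k, (f i ∪ w i) ∈ H ∧ (f i ∪ w i).card = 3 ∧
      (∀ x ∈ w i, x ∉ VP) ∧ (∀ x ∈ w i, x ∉ g 0 ∪ g 1) := by
    intro i hi
    by_cases hmem : i ∈ hvI
    · obtain ⟨x, hwx, hxT, hxF⟩ := hw1 i hmem
      have h2 : (f i).card = 2 := by
        rw [hvIdef, Finset.mem_filter] at hmem
        exact hmem.2
      obtain ⟨hin, hnotf⟩ := hTmem i hi x hxT h2
      rw [hFbdef, Finset.mem_union, not_or] at hxF
      have hxVP : x ∉ VP := fun hx =>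
        hxF.1 (Finset.mem_sdiff.2 ⟨hx, hnotf⟩)
      have hxab : x ≠ a ∧ x ≠ b := by
        constructor
        · rintro rfl; exact hxVP haVP
        · rintro rfl; exact hxVP hbVP
      have hxg : x ∉ g 0 ∪ g 1 := fun hx =>
        hxF.2 (Finset.mem_sdiff.2 ⟨hx, by
          intro hmem'
          rcases Finset.mem_insert.1 hmem' with rfl | hmem''
          · exact hxab.1 rfl
          · rw [Finset.mem_singleton] at hmem''
            exact hxab.2 hmem''⟩)
      refine ⟨hwx ▸ hin, ?_, ?_, ?_⟩
      · rw [hwx, Finset.card_union_of_disjoint (by simpa using hnotf), h2]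
        simp
      · intro y hy
        rw [hwx, Finset.mem_singleton] at hy; subst hy; exact hxVP
      · intro y hy
        rw [hwx, Finset.mem_singleton] at hy; subst hy; exact hxg
    · have hwi : w i = ∅ := hw0 i hmem
      have h2 : (f i).card ≠ 2 := by
        intro h2
        exact hmem (by rw [hvIdef]; exact Finset.mem_filter.2 ⟨Finset.mem_range.2 hi, h2⟩)
      obtain ⟨hin, h3'⟩ := hHmem i hi h2
      rw [hwi, Finset.union_empty]
      exact ⟨hin, h3', fun x hx => absurd hx (Finset.notMem_empty x),
        fun x hx => absurd hx (Finset.notMem_empty x)⟩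
  have hwdisj : ∀ i < k, ∀ j < k, i ≠ j → w i ∩ w j = ∅ := by
    intro i hi j hj hij
    by_cases hmi : i ∈ hvI
    · by_cases hmj : j ∈ hvI
      · exact hw2 i hmi j hmj hij
      · rw [hw0 j hmj, Finset.inter_empty]
    · rw [hw0 i hmi, Finset.empty_inter]
  -- intersection normalizations
  have hkeyA : ∀ i < k, ∀ j < k, i ≠ j → (f i ∪ w i) ∩ (f j ∪ w j) = f i ∩ f j := by
    intro i hi j hj hij
    apply Finset.Subset.antisymm
    · intro x hx
      rw [Finset.mem_inter, Finset.mem_union, Finset.mem_union] at hx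
      obtain ⟨hx1, hx2⟩ := hx
      rcases hx1 with h1 | h1 <;> rcases hx2 with h2 | h2
      · exact Finset.mem_inter.2 ⟨h1, h2⟩
      · exact absurd (hfVP i hi h1) ((hwprop j hj).2.2.1 x h2)
      · exact absurd (hfVP j hj h2) ((hwprop i hi).2.2.1 x h1)
      · exact absurd (Finset.mem_inter.2 ⟨h1, h2⟩)
          (by rw [hwdisj i hi j hj hij]; exact Finset.notMem_empty x)
    · intro x hx
      rw [Finset.mem_inter] at hx
      exact Finset.mem_inter.2 ⟨Finset.mem_union_left _ hx.1, Finset.mem_union_left _ hx.2⟩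
  have hkeyB : ∀ i < k, ∀ t, t < 2 → (f i ∪ w i) ∩ g t = f i ∩ g t := by
    intro i hi t ht
    apply Finset.Subset.antisymm
    · intro x hx
      rw [Finset.mem_inter, Finset.mem_union] at hx
      obtain ⟨hx1, hx2⟩ := hx
      rcases hx1 with h1 | h1
      · exact Finset.mem_inter.2 ⟨h1, hx2⟩
      · exfalso
        apply (hwprop i hi).2.2.2 x h1
        rcases Nat.lt_or_ge t 1 with h | h
        · rw [show t = 0 by omega] at hx2; exact Finset.mem_union_left _ hx2
        · rw [show t = 1 by omega] at hx2; exact Finset.mem_union_right _ hx2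
    · intro x hx
      rw [Finset.mem_inter] at hx
      exact Finset.mem_inter.2 ⟨Finset.mem_union_left _ hx.1, hx.2⟩
  have hmemVP : ∀ x ∈ VP, x ∈ S ∨ x = a ∨ x = b := by
    intro x hx
    by_cases hxa : x = a
    · exact Or.inr (Or.inl hxa)
    by_cases hxb : x = b
    · exact Or.inr (Or.inr hxb)
    refine Or.inl (Finset.mem_sdiff.2 ⟨hx, ?_⟩)
    intro hmem
    rcases Finset.mem_insert.1 hmem with h | h
    · exact hxa h
    · exact hxb (Finset.mem_singleton.1 h)
  have hfg1 : ∀ i, i < k - 1 → f i ∩ g 1 = ∅ := by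
    intro i hi
    refine Finset.eq_empty_of_forall_notMem (fun x hx => ?_)
    rw [Finset.mem_inter] at hx
    rcases hmemVP x (hfVP i (by omega) hx.1) with h | h | h
    · exact hgScap 1 (by omega) x h hx.2
    · subst h; exact hag1 hx.2
    · subst h; exact hbf i hi hx.1
  have hfg1k : f (k-1) ∩ g 1 = {b} := by
    apply Finset.Subset.antisymm
    · intro x hx
      rw [Finset.mem_inter] at hx
      rcases hmemVP x (hfVP (k-1) (by omega) hx.1) with h | h | h
      · exact absurd hx.2 (hgScap 1 (by omega) x h)
      · exact absurd hx.2 (h ▸ hag1)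
      · exact Finset.mem_singleton.2 h
    · intro x hx
      rw [Finset.mem_singleton] at hx; subst hx
      exact Finset.mem_inter.2 ⟨hbk, hbg1⟩
  have hfg0 : ∀ i, 1 ≤ i → i < k → f i ∩ g 0 = ∅ := by
    intro i h1 hi
    refine Finset.eq_empty_of_forall_notMem (fun x hx => ?_)
    rw [Finset.mem_inter] at hx
    rcases hmemVP x (hfVP i hi hx.1) with h | h | h
    · exact hgScap 0 (by omega) x h hx.2
    · subst h; exact haf i h1 hi hx.1
    · subst h; exact hbg0 hx.2
  have hfg00 : f 0 ∩ g 0 = {a} := by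
    apply Finset.Subset.antisymm
    · intro x hx
      rw [Finset.mem_inter] at hx
      rcases hmemVP x (hfVP 0 (by omega) hx.1) with h | h | h
      · exact absurd hx.2 (hgScap 0 (by omega) x h)
      · exact Finset.mem_singleton.2 h
      · exact absurd hx.2 (h ▸ hbg0)
    · intro x hx
      rw [Finset.mem_singleton] at hx; subst hx
      exact Finset.mem_inter.2 ⟨ha0, hag0⟩
  -- the cycle
  set cyc : ℕ → Finset α := fun i => if i < k then f i ∪ w i else if i = k then g 1 else g 0
    with hcycdef
  have hcyclt : ∀ i < k, cyc i = f i ∪ w i := fun i hi => if_pos hi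
  have hcyck : cyc k = g 1 := by
    rw [hcycdef]
    show (if k < k then f k ∪ w k else if k = k then g 1 else g 0) = g 1
    rw [if_neg (lt_irrefl k), if_pos rfl]
  have hcyck1 : cyc (k+1) = g 0 := by
    rw [hcycdef]
    show (if k + 1 < k then f (k+1) ∪ w (k+1) else if k + 1 = k then g 1 else g 0) = g 0
    rw [if_neg (by omega), if_neg (by omega)]
  have hcycH : ∀ i < l, cyc i ∈ H := by
    intro i hi
    rcases Nat.lt_or_ge i k with h | h
    · rw [hcyclt i h]; exact (hwprop i h).1
    · rcases Nat.lt_or_ge i (k+1) with h' | h'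
      · rw [show i = k by omega, hcyck]; exact hg1H
      · rw [show i = k + 1 by omega, hcyck1]; exact hg0H
  have hcyccard : ∀ i < l, (cyc i).card = 3 := fun i hi => h3 _ (hcycH i hi)
  have hmodl : ∀ i, i < l → (i + 1) % l = if i + 1 = l then 0 else i + 1 := by
    intro i hi
    by_cases h0 : i + 1 = l
    · rw [if_pos h0, h0, Nat.mod_self]
    · rw [if_neg h0]; exact Nat.mod_eq_of_lt (by omega)
  have hadjc : ∀ i < l, (cyc i ∩ cyc ((i + 1) % l)).card = 1 := by
    intro i hi
    rw [hmodl i hi]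
    rcases Nat.lt_or_ge i (k-1) with h | h
    · rw [if_neg (by omega), hcyclt i (by omega), hcyclt (i+1) (by omega),
        hkeyA i (by omega) (i+1) (by omega) (by omega)]
      exact path_adj_card hf i (by omega)
    · rcases Nat.lt_or_ge i k with h' | h'
      · have hik : i = k - 1 := by omega
        rw [if_neg (by omega), hcyclt i (by omega), show i + 1 = k by omega, hcyck,
          hkeyB i (by omega) 1 (by omega), hik, hfg1k]
        exact Finset.card_singleton b
      · rcases Nat.lt_or_ge i (k+1) with h'' | h''
        · have hik : i = k := by omega
          rw [if_neg (by omega), hik, hcyck, show k + 1 = k + 1 from rfl, hcyck1,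
            Finset.inter_comm, hg01]
        · have hik : i = k + 1 := by omega
          rw [if_pos (by omega), hik, hcyck1, hcyclt 0 (by omega), Finset.inter_comm,
            hkeyB 0 (by omega) 0 (by omega), hfg00]
          exact Finset.card_singleton a
  have hdisjc : ∀ i < l, ∀ j < l, j ≠ i → j ≠ (i + 1) % l → i ≠ (j + 1) % l →
      cyc i ∩ cyc j = ∅ := by
    intro i hi j hj h1 h2 h3'
    rw [hmodl i hi] at h2
    rw [hmodl j hj] at h3'
    rcases Nat.lt_or_ge i k with hik | hik <;> rcases Nat.lt_or_ge j k with hjk | hjk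
    · -- both path edges
      rw [if_neg (by omega)] at h2
      rw [if_neg (by omega)] at h3'
      rw [hcyclt i hik, hcyclt j hjk, hkeyA i hik j hjk (fun hh => h1 hh.symm)]
      exact path_disj hf i hik j hjk (fun hh => h1 hh.symm) h2 h3'
    · -- i < k ≤ j
      rcases Nat.lt_or_ge j (k+1) with hj' | hj'
      · -- j = k : cyc j = g 1 ; need i < k - 1
        have hjk' : j = k := by omega
        rw [if_neg (by omega)] at h2
        rw [hcyclt i hik, hjk', hcyck]
        exact hfg1 i (by omega) ▸ (hkeyB i hik 1 (by omega))
      · -- j = k+1 : cyc j = g 0 ; need 1 ≤ i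
        have hjk' : j = k + 1 := by omega
        rw [if_pos (by omega)] at h3'
        rw [hcyclt i hik, hjk', hcyck1]
        exact hfg0 i (by omega) hik ▸ (hkeyB i hik 0 (by omega))
    · -- j < k ≤ i
      rcases Nat.lt_or_ge i (k+1) with hi' | hi'
      · have hik' : i = k := by omega
        rw [if_neg (by omega)] at h3'
        rw [hcyclt j hjk, hik', hcyck, Finset.inter_comm]
        exact hfg1 j (by omega) ▸ (hkeyB j hjk 1 (by omega))
      · have hik' : i = k + 1 := by omega
        rw [if_pos (by omega)] at h2
        rw [hcyclt j hjk, hik', hcyck1, Finset.inter_comm]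
        exact hfg0 j (by omega) hjk ▸ (hkeyB j hjk 0 (by omega))
    · -- both cherry edges : adjacent, hypotheses contradictory
      exfalso
      have hik' : i = k ∨ i = k + 1 := by omega
      have hjk' : j = k ∨ j = k + 1 := by omega
      rcases hik' with h'' | h'' <;> rcases hjk' with h' | h'
      · exact h1 (by omega)
      · rw [if_neg (by omega)] at h2
        exact h2 (by omega)
      · rw [if_neg (by omega)] at h3'
        exact h3' (by omega)
      · exact h1 (by omega)
  refine hfree ⟨cyc, ⟨?_, ?_, hadjc, hdisjc⟩, hcyccard, fun i hi => hcycH i hi⟩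
  · intro i hi j hj hij heq
    by_cases hadj : j = (i + 1) % l
    · have := hadjc i hi
      rw [← hadj, ← heq, Finset.inter_self] at this
      have := hcyccard i hi
      omega
    · by_cases hadj' : i = (j + 1) % l
      · have := hadjc j hj
        rw [← hadj', ← heq, Finset.inter_self] at this
        have := hcyccard i hi
        omega
      · have hd := hdisjc i hi j hj (fun hh => hij hh.symm) hadj hadj'
        rw [heq, Finset.inter_self] at hd
        have := hcyccard j hj
        rw [hd] at this
        simp at this
  · intro i hi
    rw [hcyccard i hi]
    omega

end LooseAux

/-- If `(X, Y)` is an extender in a `C_l^3`-free 3-graph `H` then `X` contains a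
subset `Z` of size at least `|X| / (l - 2)` which is independent in `H*`. -/
theorem extender_independent_subset {α : Type*} [DecidableEq α] (l : ℕ) (hl : 3 ≤ l)
    (H : Finset (Finset α)) (h3 : ∀ e ∈ H, e.card = 3)
    (hfree : ¬ ContainsUniformLooseCycle 3 l (↑H : Set (Finset α)))
    (X Y : Finset α) (hXY : IsExtender l H X Y) :
    ∃ Z ⊆ X, IndepIn (Reduced l H) Z ∧
      (X.card : ℝ) / ((l : ℝ) - 2) ≤ (Z.card : ℝ) := by
  classical
  set k := l - 2 with hkdef
  have hk1 : 1 ≤ k := by omega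
  set KX : Finset (Finset α) :=
    (H.filter (fun e => EdgeLight l H e ∧ e ⊆ X)) ∪
      (X.powerset.filter (fun p => PairHeavy l H p)) with hKXdef
  have hKXmem : ∀ e ∈ KX, e ⊆ X ∧ (EdgeLight l H e ∨ PairHeavy l H e) := by
    intro e he
    rcases Finset.mem_union.1 he with h | h
    · rw [Finset.mem_filter] at h
      exact ⟨h.2.2, Or.inl h.2.1⟩
    · rw [Finset.mem_filter, Finset.mem_powerset] at h
      exact ⟨h.1, Or.inr h.2⟩
  have hKXcard : ∀ e ∈ KX, e ⊆ X ∧ 2 ≤ e.card ∧ e.card ≤ 3 := by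
    intro e he
    obtain ⟨hsub, hlh⟩ := hKXmem e he
    rcases hlh with hL | hP
    · have := h3 e hL.1
      exact ⟨hsub, by omega, by omega⟩
    · have := hP.1
      exact ⟨hsub, by omega, by omega⟩
  have hNoP : ¬ ∃ f : ℕ → Finset α, IsSimplePathOn k f ∧ ∀ i < k, f i ∈ KX := by
    rintro ⟨f, hf, hfK⟩
    exact LooseAux.no_long_path l hl H h3 hfree X Y hXY f hf
      (fun i hi => hKXmem (f i) (hfK i hi))
  obtain ⟨Z, hZX, hZind, hZcard⟩ :=
    LooseAux.indep_of_no_path k hk1 X.card X KX (le_refl _) hKXcard hNoP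
  refine ⟨Z, hZX, ?_, ?_⟩
  · intro e he hsub
    have heX : e ⊆ X := hsub.trans hZX
    rcases he with hL | hP
    · exact hZind e (Finset.mem_union_left _ (Finset.mem_filter.2 ⟨hL.1, hL, heX⟩)) hsub
    · exact hZind e (Finset.mem_union_right _
        (Finset.mem_filter.2 ⟨Finset.mem_powerset.2 heX, hP⟩)) hsub
  · have hpos : (0:ℝ) < (l:ℝ) - 2 := by
      have h3l : (3:ℝ) ≤ (l:ℝ) := by exact_mod_cast hl
      linarith
    rw [div_le_iff₀ hpos]
    have hcast : ((X.card : ℕ) : ℝ) ≤ ((k * Z.card : ℕ) : ℝ) := by exact_mod_cast hZcard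
    calc (X.card : ℝ) ≤ ((k * Z.card : ℕ) : ℝ) := hcast
      _ = (Z.card : ℝ) * ((l:ℝ) - 2) := by
          rw [hkdef, Nat.cast_mul, Nat.cast_sub (show 2 ≤ l by omega)]
          push_cast
          ring
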